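/- arXiv:1705.04648 — 2 statements merged into one kernel-verified Lean document; each statement's English description precedes it below -/
import Mathlib

section
/- The only positive fixed point of S_{2,-3} is 1, and the only cycle of length greater than 1 is (2, 4, 6): S_{2,-3}(2)=4, S_{2,-3}(4)=6, S_{2,-3}(6)=2. -/
/-- The value of a digit list `L = [a₀, a₁, …, aₙ]` in base `b`: `Σ aᵢ bⁱ`. -/
def baseVal (b : ℤ) : List ℤ → ℤ
  | [] => 0
  | d :: L => d + b * baseVal b L

/-- `L` is the base-`b` digit expansion of `a`: digits in `[0, |b|-1]`,
leading (last) digit nonzero, with value `a`. -/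
def IsDigitExpansion (b a : ℤ) (L : List ℤ) : Prop :=
  (∀ d ∈ L, 0 ≤ d ∧ d ≤ |b| - 1) ∧ L ≠ [] ∧ L.getLast! ≠ 0 ∧ baseVal b L = a

/-- `S` is the function `S_{e,b}` sending `a` to the sum of `e`-th powers of its
base-`b` digits (and `0` to `0`). -/
def IsPowSumFun (e : ℕ) (b : ℤ) (S : ℤ → ℤ) : Prop :=
  S 0 = 0 ∧ ∀ a L, IsDigitExpansion b a L → S a = (L.map (· ^ e)).sum

lemma gl_eq (a : ℤ) (M : List ℤ) : (a :: M).getLast! = (a :: M).getLast (by simp) := rfl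

lemma gl_cons (d a : ℤ) (M : List ℤ) : (d :: a :: M).getLast! = (a :: M).getLast! := by
  rw [gl_eq, gl_eq]; exact List.getLast_cons_cons

lemma gl_mem (L : List ℤ) (h : L ≠ []) : L.getLast! ∈ L := by
  cases L with
  | nil => simp at h
  | cons a M => rw [gl_eq]; exact List.getLast_mem _

lemma gl_concat (d : ℤ) (M : List ℤ) : (M ++ [d]).getLast! = d := by
  cases M with
  | nil => rfl
  | cons a M => rw [show a :: M ++ [d] = a :: (M ++ [d]) from rfl, gl_eq]; simp


lemma sumsq_le (L : List ℤ) (h : ∀ d ∈ L, 0 ≤ d ∧ d ≤ 2) :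
    (L.map (· ^ 2)).sum ≤ 4 * (L.length : ℤ) := by
  induction L with
  | nil => simp
  | cons d L ih =>
    have hd := h d (by simp)
    have h2 := ih (fun x hx => h x (by simp [hx]))
    simp only [List.map_cons, List.sum_cons, List.length_cons]
    push_cast
    nlinarith [hd.1, hd.2]

lemma baseVal_bounds (L : List ℤ) (h : ∀ d ∈ L, 0 ≤ d ∧ d ≤ 2) :
    4 * baseVal (-3) L ≤ 3 ^ (L.length + 1) - 1 ∧ 3 - 3 ^ (L.length + 1) ≤ 4 * baseVal (-3) L := by
  induction L with
  | nil => norm_num [baseVal]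
  | cons d L ih =>
    have hd := h d (by simp)
    obtain ⟨h1, h2⟩ := ih (fun x hx => h x (by simp [hx]))
    have hp : (3:ℤ) ^ (L.length + 1 + 1) = 3 * 3 ^ (L.length + 1) := by ring
    simp only [baseVal, List.length_cons, hp]
    constructor <;> linarith [hd.1, hd.2]

lemma baseVal_concat (b : ℤ) (M : List ℤ) (d : ℤ) :
    baseVal b (M ++ [d]) = baseVal b M + d * b ^ M.length := by
  induction M with
  | nil => simp [baseVal]
  | cons c M ih =>
    simp only [List.cons_append, List.append_eq, baseVal, ih, List.length_cons]
    ring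

lemma lead_lower (a : ℤ) (L : List ℤ) (h : IsDigitExpansion (-3) a L) (ha : 0 < a) :
    (3:ℤ) ^ (L.length - 1) + 3 ≤ 4 * a ∧ L.length % 2 = 1 := by
  obtain ⟨hdig, hne, hlast, hval⟩ := h
  obtain (rfl | ⟨M, d, hMd⟩) := L.eq_nil_or_concat
  · exact absurd rfl hne
  rw [List.concat_eq_append] at hMd
  subst hMd
  have habs : |(-3:ℤ)| - 1 = 2 := by norm_num
  rw [habs] at hdig
  have hdigs : ∀ x ∈ M, 0 ≤ x ∧ x ≤ 2 := fun x hx => hdig x (by simp [hx])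
  have hd : 0 ≤ d ∧ d ≤ 2 := hdig d (by simp)
  have hd1 : 1 ≤ d := by
    rw [gl_concat] at hlast; omega
  obtain ⟨hub, hlb⟩ := baseVal_bounds M hdigs
  rw [baseVal_concat] at hval
  have hlen : (M ++ [d]).length = M.length + 1 := by simp
  rw [hlen]
  set n := M.length with hn
  have hp1 : (1:ℤ) ≤ 3 ^ n := one_le_pow₀ (by norm_num)
  have hp3 : (3:ℤ) ^ (n + 1) = 3 * 3 ^ n := by ring
  have hdp : 4 * (3:ℤ) ^ n ≤ 4 * (d * 3 ^ n) := by nlinarith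
  rcases Nat.even_or_odd n with he | ho
  · have hpow : ((-3:ℤ)) ^ n = 3 ^ n := he.neg_pow 3
    rw [hpow] at hval
    refine ⟨?_, ?_⟩
    · have : n + 1 - 1 = n := rfl
      rw [this]
      linarith
    · have := Nat.even_iff.mp he
      omega
  · exfalso
    have hpow : ((-3:ℤ)) ^ n = -(3 ^ n) := ho.neg_pow 3
    rw [hpow] at hval
    nlinarith

lemma sixteen_lt (n : ℕ) (hn : 5 ≤ n) : 16 * (n : ℤ) < 3 ^ (n - 1) := by
  induction n, hn using Nat.le_induction with
  | base => norm_num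
  | succ m hm ih =>
    have h2 : m - 1 + 1 = m := by omega
    have h3 : (3:ℤ) ^ m = 3 ^ (m - 1) * 3 := by rw [← pow_succ, h2]
    have h4 : (16:ℤ) ≤ 3 ^ (m-1) := by
      have : (5:ℤ) ≤ m := by exact_mod_cast hm
      linarith
    have h5 : m + 1 - 1 = m := by omega
    rw [h5]
    push_cast
    linarith

/-- Key decrease: any expansion of `a ≥ 21` has digit-square-sum `< a`. -/
lemma sumsq_lt (a : ℤ) (L : List ℤ) (h : IsDigitExpansion (-3) a L) (ha : 21 ≤ a) :
    (L.map (· ^ 2)).sum < a := by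
  have ha0 : 0 < a := by omega
  obtain ⟨hbd, hpar⟩ := lead_lower a L h ha0
  obtain ⟨hdig, hne, hlast, hval⟩ := h
  have habs : |(-3:ℤ)| - 1 = 2 := by norm_num
  rw [habs] at hdig
  have hdigs : ∀ x ∈ L, 0 ≤ x ∧ x ≤ 2 := hdig
  have hub := (baseVal_bounds L hdigs).1
  rw [hval] at hub
  -- a ≥ 21 forces L.length ≥ 5
  have hlen5 : 5 ≤ L.length := by
    by_contra hcon
    push_neg at hcon
    have hle3 : L.length ≤ 3 := by omega
    have : (3:ℤ) ^ (L.length + 1) ≤ 3 ^ 4 := by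
      apply pow_le_pow_right₀ (by norm_num)
      omega
    norm_num at this
    linarith
  have h16 := sixteen_lt L.length hlen5
  have hs := sumsq_le L hdigs
  linarith

/-- Every nonzero integer has a base `-3` digit expansion. -/
lemma exists_expansion (a : ℤ) (ha : a ≠ 0) : ∃ L, IsDigitExpansion (-3) a L := by
  have habs : |(-3:ℤ)| - 1 = 2 := by norm_num
  suffices h : ∀ N : ℕ, ∀ a : ℤ, a ≠ 0 → 2 * a.natAbs + (if a < 0 then 1 else 0) ≤ N →
      ∃ L, IsDigitExpansion (-3) a L by
    exact h _ a ha le_rfl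
  intro N
  induction N using Nat.strong_induction_on with
  | _ N ih =>
    intro a ha hm
    set d := a % 3 with hd
    have hd0 : 0 ≤ d := Int.emod_nonneg a (by norm_num)
    have hd2 : d < 3 := Int.emod_lt_of_pos a (by norm_num)
    have hdm := Int.mul_ediv_add_emod a 3
    set a' := -(a / 3) with ha'
    have key : a = d + (-3) * a' := by
      rw [ha']; omega
    by_cases h0 : a' = 0
    · refine ⟨[d], ?_, by simp, ?_, ?_⟩
      · intro x hx
        simp at hx
        subst hx
        omega
      · show d ≠ 0
        rw [h0] at key
        omega
      · show d + (-3) * baseVal (-3) [] = a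
        rw [show baseVal (-3) [] = 0 from rfl]
        omega
    · have hrel : 3 * a' = d - a := by omega
      have hmeas : 2 * a'.natAbs + (if a' < 0 then 1 else 0) <
          2 * a.natAbs + (if a < 0 then 1 else 0) := by
        split_ifs <;> omega
      obtain ⟨L', hL⟩ := ih (2 * a'.natAbs + (if a' < 0 then 1 else 0)) (by omega) a' h0 le_rfl
      obtain ⟨hdig', hne', hlast', hval'⟩ := hL
      refine ⟨d :: L', ?_, by simp, ?_, ?_⟩
      · intro x hx
        rcases List.mem_cons.mp hx with rfl | hx
        · omega
        · exact hdig' x hx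
      · cases L' with
        | nil => exact absurd rfl hne'
        | cons b M => rw [gl_cons]; exact hlast'
      · show d + (-3) * baseVal (-3) L' = a
        rw [hval']
        omega


lemma sumsq_pos (a : ℤ) (L : List ℤ) (h : IsDigitExpansion (-3) a L) :
    0 < (L.map (· ^ 2)).sum := by
  obtain ⟨hdig, hne, hlast, -⟩ := h
  have hmem : L.getLast! ∈ L := gl_mem L hne
  have hb := hdig _ hmem
  have h0 : 1 ≤ L.getLast! := by omega
  have h1 : (1:ℤ) ≤ L.getLast! ^ 2 := by nlinarith
  have h2 : L.getLast! ^ 2 ≤ (L.map (· ^ 2)).sum := by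
    apply List.single_le_sum
    · intro x hx
      simp only [List.mem_map] at hx
      obtain ⟨y, -, rfl⟩ := hx
      positivity
    · exact List.mem_map_of_mem hmem
  linarith

def InCyc (a : ℤ) : Prop := a = 1 ∨ a = 2 ∨ a = 4 ∨ a = 6

theorem cycles_base_neg_three (S : ℤ → ℤ) (hS : IsPowSumFun 2 (-3) S) :
    (∀ a : ℤ, 0 < a → (S a = a ↔ a = 1)) ∧
      S 2 = 4 ∧ S 4 = 6 ∧ S 6 = 2 ∧
      (∀ a : ℤ, 0 < a → ∀ m : ℕ, 1 ≤ m → S^[m] a = a →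
        a = 1 ∨ a = 2 ∨ a = 4 ∨ a = 6) := by
  obtain ⟨hS0, hSv⟩ := hS
  have hv1 : S 1 = 1 := by rw [hSv 1 [1] (by unfold IsDigitExpansion; decide)]; decide
  have hv2 : S 2 = 4 := by rw [hSv 2 [2] (by unfold IsDigitExpansion; decide)]; decide
  have hv3 : S 3 = 5 := by rw [hSv 3 [0, 2, 1] (by unfold IsDigitExpansion; decide)]; decide
  have hv4 : S 4 = 6 := by rw [hSv 4 [1, 2, 1] (by unfold IsDigitExpansion; decide)]; decide
  have hv5 : S 5 = 9 := by rw [hSv 5 [2, 2, 1] (by unfold IsDigitExpansion; decide)]; decide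
  have hv6 : S 6 = 2 := by rw [hSv 6 [0, 1, 1] (by unfold IsDigitExpansion; decide)]; decide
  have hv7 : S 7 = 3 := by rw [hSv 7 [1, 1, 1] (by unfold IsDigitExpansion; decide)]; decide
  have hv8 : S 8 = 6 := by rw [hSv 8 [2, 1, 1] (by unfold IsDigitExpansion; decide)]; decide
  have hv9 : S 9 = 1 := by rw [hSv 9 [0, 0, 1] (by unfold IsDigitExpansion; decide)]; decide
  have hv10 : S 10 = 2 := by rw [hSv 10 [1, 0, 1] (by unfold IsDigitExpansion; decide)]; decide
  have hv11 : S 11 = 5 := by rw [hSv 11 [2, 0, 1] (by unfold IsDigitExpansion; decide)]; decide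
  have hv12 : S 12 = 8 := by rw [hSv 12 [0, 2, 2] (by unfold IsDigitExpansion; decide)]; decide
  have hv13 : S 13 = 9 := by rw [hSv 13 [1, 2, 2] (by unfold IsDigitExpansion; decide)]; decide
  have hv14 : S 14 = 12 := by rw [hSv 14 [2, 2, 2] (by unfold IsDigitExpansion; decide)]; decide
  have hv15 : S 15 = 5 := by rw [hSv 15 [0, 1, 2] (by unfold IsDigitExpansion; decide)]; decide
  have hv16 : S 16 = 6 := by rw [hSv 16 [1, 1, 2] (by unfold IsDigitExpansion; decide)]; decide
  have hv17 : S 17 = 9 := by rw [hSv 17 [2, 1, 2] (by unfold IsDigitExpansion; decide)]; decide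
  have hv18 : S 18 = 4 := by rw [hSv 18 [0, 0, 2] (by unfold IsDigitExpansion; decide)]; decide
  have hv19 : S 19 = 5 := by rw [hSv 19 [1, 0, 2] (by unfold IsDigitExpansion; decide)]; decide
  have hv20 : S 20 = 8 := by rw [hSv 20 [2, 0, 2] (by unfold IsDigitExpansion; decide)]; decide
  have hSlt : ∀ a : ℤ, 21 ≤ a → 0 < S a ∧ S a < a := by
    intro a ha
    obtain ⟨L, hL⟩ := exists_expansion a (by omega)
    have hv := hSv a L hL
    rw [hv]
    exact ⟨sumsq_pos a L hL, sumsq_lt a L hL ha⟩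
  have hreach : ∀ n : ℕ, ∀ a : ℤ, 0 < a → a ≤ n → ∃ k, InCyc (S^[k] a) := by
    intro n
    induction n with
    | zero => intro a ha h; exfalso; omega
    | succ n ih =>
      intro a ha hle
      by_cases h20 : a ≤ 20
      · interval_cases a
        · exact ⟨0, by unfold InCyc; norm_num⟩
        · exact ⟨0, by unfold InCyc; norm_num⟩
        · refine ⟨3, ?_⟩
          show InCyc (S (S (S (3))))
          rw [hv3, hv5, hv9]
          unfold InCyc; norm_num
        · exact ⟨0, by unfold InCyc; norm_num⟩
        · refine ⟨2, ?_⟩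
          show InCyc (S (S (5)))
          rw [hv5, hv9]
          unfold InCyc; norm_num
        · exact ⟨0, by unfold InCyc; norm_num⟩
        · refine ⟨4, ?_⟩
          show InCyc (S (S (S (S (7)))))
          rw [hv7, hv3, hv5, hv9]
          unfold InCyc; norm_num
        · refine ⟨1, ?_⟩
          show InCyc (S (8))
          rw [hv8]
          unfold InCyc; norm_num
        · refine ⟨1, ?_⟩
          show InCyc (S (9))
          rw [hv9]
          unfold InCyc; norm_num
        · refine ⟨1, ?_⟩
          show InCyc (S (10))
          rw [hv10]
          unfold InCyc; norm_num
        · refine ⟨3, ?_⟩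
          show InCyc (S (S (S (11))))
          rw [hv11, hv5, hv9]
          unfold InCyc; norm_num
        · refine ⟨2, ?_⟩
          show InCyc (S (S (12)))
          rw [hv12, hv8]
          unfold InCyc; norm_num
        · refine ⟨2, ?_⟩
          show InCyc (S (S (13)))
          rw [hv13, hv9]
          unfold InCyc; norm_num
        · refine ⟨3, ?_⟩
          show InCyc (S (S (S (14))))
          rw [hv14, hv12, hv8]
          unfold InCyc; norm_num
        · refine ⟨3, ?_⟩
          show InCyc (S (S (S (15))))
          rw [hv15, hv5, hv9]
          unfold InCyc; norm_num
        · refine ⟨1, ?_⟩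
          show InCyc (S (16))
          rw [hv16]
          unfold InCyc; norm_num
        · refine ⟨2, ?_⟩
          show InCyc (S (S (17)))
          rw [hv17, hv9]
          unfold InCyc; norm_num
        · refine ⟨1, ?_⟩
          show InCyc (S (18))
          rw [hv18]
          unfold InCyc; norm_num
        · refine ⟨3, ?_⟩
          show InCyc (S (S (S (19))))
          rw [hv19, hv5, hv9]
          unfold InCyc; norm_num
        · refine ⟨2, ?_⟩
          show InCyc (S (S (20)))
          rw [hv20, hv8]
          unfold InCyc; norm_num
      · push_neg at h20
        obtain ⟨hpos, hlt⟩ := hSlt a (by omega)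
        obtain ⟨k, hk⟩ := ih (S a) hpos (by omega)
        exact ⟨k + 1, by rwa [Function.iterate_succ_apply]⟩
  have hinv : ∀ a : ℤ, InCyc a → InCyc (S a) := by
    rintro a (rfl | rfl | rfl | rfl)
    · rw [hv1]; unfold InCyc; norm_num
    · rw [hv2]; unfold InCyc; norm_num
    · rw [hv4]; unfold InCyc; norm_num
    · rw [hv6]; unfold InCyc; norm_num
  have hinv_iter : ∀ k : ℕ, ∀ a : ℤ, InCyc a → InCyc (S^[k] a) := by
    intro k
    induction k with
    | zero => intro a ha; exact ha
    | succ k ih =>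
      intro a ha
      rw [Function.iterate_succ_apply']
      exact hinv _ (ih a ha)
  have hcyc : ∀ a : ℤ, 0 < a → ∀ m : ℕ, 1 ≤ m → S^[m] a = a →
      a = 1 ∨ a = 2 ∨ a = 4 ∨ a = 6 := by
    intro a ha m hm hfix
    obtain ⟨k, hk⟩ := hreach a.toNat a ha (by omega)
    have hfix2 : S^[m * (k + 1)] a = a := by
      rw [Function.iterate_mul]
      exact Function.IsFixedPt.iterate hfix (k + 1)
    have hklem : k + 1 ≤ m * (k + 1) := Nat.le_mul_of_pos_left _ hm
    have hsplit : (m * (k + 1) - k) + k = m * (k + 1) := by omega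
    have : InCyc a := by
      nth_rewrite 1 [← hfix2]
      rw [← hsplit, Function.iterate_add_apply]
      exact hinv_iter _ _ hk
    exact this
  refine ⟨?_, hv2, hv4, hv6, hcyc⟩
  intro a ha
  constructor
  · intro hfx
    have h1 := hcyc a ha 1 le_rfl (by simpa using hfx)
    rcases h1 with rfl | rfl | rfl | rfl
    · rfl
    · rw [hv2] at hfx; omega
    · rw [hv4] at hfx; omega
    · rw [hv6] at hfx; omega
  · rintro rfl
    exact hv1
end

section
/- There exists an infinite arithmetic progression with common difference 3 consisting entirely of −2-happy numbers; in particular, the set {a ∈ ℤ^+ : a ≡ 1 (mod 3)} consists entirely of −2-happy numbers. -/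
/-! ### Auxiliary development -/

def negDigits (a : ℤ) : List ℤ :=
  if a = 0 then [] else (a % 2) :: negDigits (-(a / 2))
termination_by a.natAbs * 2 + (if a < 0 then 1 else 0)
decreasing_by split_ifs <;> omega

lemma negDigits_zero : negDigits 0 = [] := by rw [negDigits]; simp

lemma negDigits_cons {a : ℤ} (h : a ≠ 0) : negDigits a = (a % 2) :: negDigits (-(a / 2)) := by
  rw [negDigits]; simp [h]

lemma negDigits_one : negDigits 1 = [1] := by
  rw [negDigits_cons one_ne_zero]; norm_num [negDigits_zero]

lemma negDigits_mem (a : ℤ) : ∀ d ∈ negDigits a, d = 0 ∨ d = 1 := by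
  induction a using negDigits.induct with
  | case1 => rw [negDigits_zero]; simp
  | case2 a h ih =>
    rw [negDigits_cons h]; simp only [List.mem_cons]
    rintro d (rfl | hd)
    · omega
    · exact ih d hd

lemma negDigits_val (a : ℤ) : baseVal (-2) (negDigits a) = a := by
  induction a using negDigits.induct with
  | case1 => rw [negDigits_zero]; simp [baseVal]
  | case2 a h ih => rw [negDigits_cons h]; simp only [baseVal, ih]; omega

lemma getLast!_cons {d : ℤ} {L : List ℤ} (h : L ≠ []) : (d :: L).getLast! = L.getLast! := by
  cases L with
  | nil => simp at h
  | cons e M => simp [List.getLast!, List.getLast]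

lemma negDigits_getLast (a : ℤ) (h : a ≠ 0) : (negDigits a).getLast! = 1 := by
  induction a using negDigits.induct with
  | case1 => simp at h
  | case2 a h' ih =>
    rw [negDigits_cons h']
    by_cases h2 : -(a / 2) = 0
    · rw [h2, negDigits_zero]
      have : a = 1 := by omega
      simp [this]
    · rw [getLast!_cons]
      · exact ih h2
      · rw [negDigits_cons h2]; simp

lemma negDigits_ne_nil {a : ℤ} (h : a ≠ 0) : negDigits a ≠ [] := by
  rw [negDigits_cons h]; simp

lemma negDigits_isExpansion {a : ℤ} (h : a ≠ 0) : IsDigitExpansion (-2) a (negDigits a) := by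
  refine ⟨fun d hd => ?_, negDigits_ne_nil h, by rw [negDigits_getLast a h]; norm_num,
    negDigits_val a⟩
  rcases negDigits_mem a d hd with rfl | rfl <;> norm_num

lemma sum_sq (L : List ℤ) (h : ∀ d ∈ L, d = 0 ∨ d = 1) : (L.map (· ^ 2)).sum = L.sum := by
  induction L with
  | nil => simp
  | cons d M ih =>
    simp only [List.map_cons, List.sum_cons, ih (fun x hx => h x (List.mem_cons_of_mem d hx))]
    rcases h d (List.mem_cons_self (a := d) (l := M)) with rfl | rfl <;> norm_num

lemma mod3 (L : List ℤ) : (baseVal (-2) L) % 3 = L.sum % 3 := by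
  induction L with
  | nil => simp [baseVal]
  | cons d M ih => simp only [baseVal, List.sum_cons]; omega

lemma sum_le_len (L : List ℤ) (h : ∀ d ∈ L, d = 0 ∨ d = 1) : L.sum ≤ L.length := by
  induction L with
  | nil => simp
  | cons d M ih =>
    have := ih (fun x hx => h x (List.mem_cons_of_mem d hx))
    have := h d (List.mem_cons_self (a := d) (l := M))
    simp only [List.sum_cons, List.length_cons]
    push_cast; omega

lemma one_le_sum (L : List ℤ) (h : ∀ d ∈ L, d = 0 ∨ d = 1) (hne : L ≠ [])
    (hlast : L.getLast! = 1) : 1 ≤ L.sum := by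
  induction L with
  | nil => simp at hne
  | cons d M ih =>
    by_cases hM : M = []
    · subst hM
      have : d = 1 := by simpa [List.getLast!, List.getLast] using hlast
      simp [this]
    · have h1 := ih (fun x hx => h x (List.mem_cons_of_mem d hx)) hM
        (by rwa [getLast!_cons hM] at hlast)
      have := h d (List.mem_cons_self (a := d) (l := M))
      simp only [List.sum_cons]; omega

lemma bound (L : List ℤ) (h01 : ∀ d ∈ L, d = 0 ∨ d = 1) (hne : L ≠ [])
    (hlast : L.getLast! = 1) :
    (Odd L.length ∧ 2 ^ (L.length - 1) + 2 ≤ 3 * baseVal (-2) L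
        ∧ 3 * baseVal (-2) L ≤ 2 ^ (L.length + 1) - 1) ∨
    (Even L.length ∧ 3 * baseVal (-2) L ≤ -(2 ^ (L.length - 1)) - 1
        ∧ -(2 ^ (L.length + 1)) + 2 ≤ 3 * baseVal (-2) L) := by
  induction L with
  | nil => simp at hne
  | cons d M ih =>
    by_cases hM : M = []
    · subst hM
      have : d = 1 := by simpa [List.getLast!, List.getLast] using hlast
      subst this
      left
      refine ⟨⟨0, by norm_num⟩, ?_, ?_⟩ <;> simp [baseVal]
    · have hd := h01 d (List.mem_cons_self (a := d) (l := M))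
      have IH := ih (fun x hx => h01 x (List.mem_cons_of_mem d hx)) hM
        (by rwa [getLast!_cons hM] at hlast)
      obtain ⟨m, hm⟩ : ∃ m, M.length = m + 1 := by
        cases M with
        | nil => exact absurd rfl hM
        | cons x y => exact ⟨y.length, rfl⟩
      have hlen : (d :: M).length = m + 2 := by simp [hm]
      rw [hlen]
      rw [hm] at IH
      simp only [Nat.add_sub_cancel] at IH ⊢
      have e0 : m + 2 - 1 = m + 1 := rfl
      rw [e0]
      have hp : (0:ℤ) < 2 ^ m := by positivity
      have e1 : (2:ℤ) ^ (m + 1) = 2 * 2 ^ m := by ring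
      have e2 : (2:ℤ) ^ (m + 2) = 4 * 2 ^ m := by ring
      have e3 : (2:ℤ) ^ (m + 3) = 8 * 2 ^ m := by ring
      have hodd : Odd (m + 2) ↔ ¬ Odd (m + 1) := by rw [Nat.odd_iff, Nat.odd_iff]; omega
      have heven : Even (m + 2) ↔ Odd (m + 1) := by rw [Nat.even_iff, Nat.odd_iff]; omega
      have hoe : Odd (m + 1) ↔ ¬ Even (m + 1) := by rw [Nat.odd_iff, Nat.even_iff]; omega
      simp only [baseVal, e1, e2, e3] at IH ⊢
      generalize hq : (2:ℤ) ^ m = p at hp IH ⊢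
      generalize hv : baseVal (-2) M = v at IH
      rcases IH with ⟨ho, h1, h2⟩ | ⟨he, h1, h2⟩
      · right
        refine ⟨heven.mpr ho, ?_, ?_⟩ <;> rcases hd with rfl | rfl <;> omega
      · left
        refine ⟨hodd.mpr (fun hc => (hoe.mp hc) he), ?_, ?_⟩ <;>
          rcases hd with rfl | rfl <;> omega

lemma pow_lower : ∀ n : ℕ, 5 ≤ n → (3 * n + 1 : ℤ) ≤ 2 ^ (n - 1) := by
  intro n hn
  obtain ⟨m, rfl⟩ : ∃ m, n = m + 5 := ⟨n - 5, by omega⟩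
  have h : (m : ℤ) + 1 ≤ 2 ^ m := by exact_mod_cast Nat.lt_two_pow_self (n := m)
  have e : (2:ℤ) ^ (m + 5 - 1) = 16 * 2 ^ m := by
    have : m + 5 - 1 = m + 4 := rfl
    rw [this]; ring
  rw [e]
  push_cast
  nlinarith

lemma sum_lt {a : ℤ} (ha : 4 ≤ a) : (negDigits a).sum < a := by
  have h0 : a ≠ 0 := by omega
  have h01 := negDigits_mem a
  have hne := negDigits_ne_nil h0
  have hlast := negDigits_getLast a h0
  have hsum := sum_le_len _ h01
  have hb := bound _ h01 hne hlast
  rw [negDigits_val] at hb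
  set n := (negDigits a).length with hn
  rcases hb with ⟨ho, h1, h2⟩ | ⟨he, h1, h2⟩
  · by_cases h5 : 5 ≤ n
    · have := pow_lower n h5
      omega
    · have : n ≤ 3 := by
        rcases ho with ⟨t, ht⟩; omega
      omega
  · have hp : (0:ℤ) < 2 ^ (n - 1) := by positivity
    omega

/-! ### Main theorem -/

theorem infinite_progression_neg_two_happy (S : ℤ → ℤ) (hS : IsPowSumFun 2 (-2) S) :
    (∃ m : ℤ, 0 < m ∧ ∀ j : ℕ, ∃ k : ℕ, 1 ≤ k ∧ S^[k] (m + 3 * j) = 1) ∧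
      ∀ a : ℤ, 0 < a → a ≡ 1 [ZMOD 3] → ∃ k : ℕ, 1 ≤ k ∧ S^[k] a = 1 := by
  have hval : ∀ a : ℤ, a ≠ 0 → S a = (negDigits a).sum := by
    intro a ha
    rw [hS.2 a (negDigits a) (negDigits_isExpansion ha), sum_sq _ (negDigits_mem a)]
  have main : ∀ n : ℕ, ∀ a : ℤ, a.toNat ≤ n → 0 < a → a % 3 = 1 % 3 →
      ∃ k : ℕ, 1 ≤ k ∧ S^[k] a = 1 := by
    intro n
    induction n with
    | zero => intro a h ha _; omega
    | succ n IH =>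
      intro a hn ha hmod
      have hSa : S a = (negDigits a).sum := hval a (by omega)
      by_cases h1 : a = 1
      · subst h1
        refine ⟨1, le_refl 1, ?_⟩
        rw [Function.iterate_one, hSa, negDigits_one]
        simp
      · have ha4 : 4 ≤ a := by omega
        have h2 : S a < a := by rw [hSa]; exact sum_lt ha4
        have h3 : 1 ≤ S a := by
          rw [hSa]
          exact one_le_sum _ (negDigits_mem a) (negDigits_ne_nil (by omega))
            (negDigits_getLast a (by omega))
        have h4 : S a % 3 = 1 % 3 := by
          have := mod3 (negDigits a)
          rw [negDigits_val] at this
          omega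
        obtain ⟨k, hk, hk1⟩ := IH (S a) (by omega) (by omega) h4
        exact ⟨k + 1, by omega, by rw [Function.iterate_succ_apply]; exact hk1⟩
  have part2 : ∀ a : ℤ, 0 < a → a ≡ 1 [ZMOD 3] → ∃ k : ℕ, 1 ≤ k ∧ S^[k] a = 1 := by
    intro a ha hm
    exact main a.toNat a le_rfl ha hm
  refine ⟨⟨1, one_pos, fun j => ?_⟩, part2⟩
  refine part2 (1 + 3 * j) (by positivity) ?_
  show (1 + 3 * (j:ℤ)) % 3 = 1 % 3
  omega
end
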